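/- Let n be a positive integer and a ≥ 0 with na ≤ 1/2. Then the sum over k from 1 to n of binom(n,k) · sqrt((2k)!) · k · (a/2)^k is at most 4na. -/

import Mathlib

open Finset

lemma choose_two_mul_self_le (k : ℕ) : (2 * k).choose k ≤ 4 ^ k := by
  calc (2 * k).choose k ≤ ∑ m ∈ range (2 * k + 1), (2 * k).choose m :=
        Finset.single_le_sum (fun i _ => Nat.zero_le _) (by simp [Nat.lt_succ_iff]; omega)
    _ = 2 ^ (2 * k) := Nat.sum_range_choose _
    _ = 4 ^ k := by rw [pow_mul]; norm_num

lemma fact_two_mul_le (k : ℕ) : (2 * k).factorial ≤ 4 ^ k * (k.factorial)^2 := by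
  have h := Nat.choose_mul_factorial_mul_factorial (show k ≤ 2 * k by omega)
  have h2 : 2 * k - k = k := by omega
  rw [h2] at h
  calc (2 * k).factorial = (2 * k).choose k * k.factorial * k.factorial := h.symm
    _ ≤ 4 ^ k * k.factorial * k.factorial :=
        Nat.mul_le_mul_right _ (Nat.mul_le_mul_right _ (choose_two_mul_self_le k))
    _ = 4 ^ k * (k.factorial)^2 := by ring

lemma sqrt_fact_le (k : ℕ) : Real.sqrt ((2 * k).factorial) ≤ 2 ^ k * k.factorial := by
  rw [show (2:ℝ) ^ k * k.factorial = Real.sqrt ((2 ^ k * (k.factorial:ℝ))^2) by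
    rw [Real.sqrt_sq (by positivity)]]
  apply Real.sqrt_le_sqrt
  have := fact_two_mul_le k
  have : ((2*k).factorial : ℝ) ≤ 4 ^ k * (k.factorial:ℝ)^2 := by exact_mod_cast this
  calc ((2*k).factorial : ℝ) ≤ 4 ^ k * (k.factorial:ℝ)^2 := this
    _ = (2 ^ k * (k.factorial:ℝ))^2 := by
        have h4 : (4:ℝ)^k = (2^k)^2 := by
          rw [← pow_mul, mul_comm, pow_mul]; norm_num
        rw [mul_pow, h4]

lemma my_geom_sum_eq (n : ℕ) :
    ∑ k ∈ range n, ((k:ℝ)+1) * (1/2)^k = 4 - (2*n+4)*(1/2)^n := by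
  induction n with
  | zero => norm_num
  | succ m ih =>
    rw [Finset.sum_range_succ, ih]
    push_cast
    ring

lemma my_geom_sum_le (n : ℕ) : ∑ k ∈ range n, ((k:ℝ)+1) * (1/2)^k ≤ 4 := by
  rw [my_geom_sum_eq]
  have : (0:ℝ) ≤ (2*n+4)*(1/2)^n := by positivity
  linarith

theorem sum_choose_sqrt_factorial_mul_k_le (n : ℕ) (hn : 0 < n) (a : ℝ) (ha : 0 ≤ a)
    (hna : (n : ℝ) * a ≤ 1 / 2) :
    ∑ k ∈ Finset.Icc 1 n,
        (n.choose k : ℝ) * Real.sqrt ((2 * k).factorial) * (k : ℝ) * (a / 2) ^ k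
      ≤ 4 * n * a := by
  set x : ℝ := (n : ℝ) * a with hx
  have hx0 : 0 ≤ x := by positivity
  have step1 : ∑ k ∈ Finset.Icc 1 n,
      (n.choose k : ℝ) * Real.sqrt ((2 * k).factorial) * (k : ℝ) * (a / 2) ^ k
      ≤ ∑ k ∈ Finset.Icc 1 n, (k : ℝ) * x ^ k := by
    apply Finset.sum_le_sum
    intro k _
    have h1 : (n.choose k : ℝ) * Real.sqrt ((2 * k).factorial) ≤
        (n.choose k : ℝ) * (2 ^ k * k.factorial) :=
      mul_le_mul_of_nonneg_left (sqrt_fact_le k) (by positivity)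
    have h2 : (n.choose k : ℝ) * k.factorial ≤ (n:ℝ) ^ k := by
      have hnat : n.choose k * k.factorial ≤ n ^ k := by
        rw [Nat.mul_comm, ← Nat.descFactorial_eq_factorial_mul_choose]
        exact Nat.descFactorial_le_pow n k
      exact_mod_cast hnat
    calc (n.choose k : ℝ) * Real.sqrt ((2 * k).factorial) * (k : ℝ) * (a / 2) ^ k
        ≤ (n.choose k : ℝ) * (2 ^ k * k.factorial) * (k : ℝ) * (a / 2) ^ k := by
          apply mul_le_mul_of_nonneg_right (mul_le_mul_of_nonneg_right h1 (by positivity))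
          positivity
      _ = ((n.choose k : ℝ) * k.factorial) * ((k : ℝ) * a ^ k) := by
          rw [div_pow]; field_simp
      _ ≤ (n:ℝ) ^ k * ((k : ℝ) * a ^ k) := by
          apply mul_le_mul_of_nonneg_right h2; positivity
      _ = (k : ℝ) * x ^ k := by rw [hx, mul_pow]; ring
  have step2 : ∑ k ∈ Finset.Icc 1 n, (k : ℝ) * x ^ k ≤ 4 * x := by
    have hre : ∑ k ∈ Finset.Icc 1 n, (k : ℝ) * x ^ k
        = ∑ j ∈ range n, ((j:ℝ)+1) * x ^ (j+1) := by
      rw [← Finset.Ico_add_one_right_eq_Icc, Finset.sum_Ico_eq_sum_range]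
      apply Finset.sum_congr rfl
      intro j _
      push_cast
      ring_nf
    rw [hre]
    calc ∑ j ∈ range n, ((j:ℝ)+1) * x ^ (j+1)
        ≤ ∑ j ∈ range n, ((j:ℝ)+1) * (1/2)^j * x := by
          apply Finset.sum_le_sum
          intro j _
          have hxle : x ^ j ≤ (1/2:ℝ)^j := pow_le_pow_left₀ hx0 hna j
          calc ((j:ℝ)+1) * x ^ (j+1) = ((j:ℝ)+1) * x ^ j * x := by ring
            _ ≤ ((j:ℝ)+1) * (1/2)^j * x := by
                apply mul_le_mul_of_nonneg_right _ hx0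
                exact mul_le_mul_of_nonneg_left hxle (by positivity)
      _ = (∑ j ∈ range n, ((j:ℝ)+1) * (1/2)^j) * x := by rw [Finset.sum_mul]
      _ ≤ 4 * x := mul_le_mul_of_nonneg_right (my_geom_sum_le n) hx0
  calc _ ≤ _ := step1
    _ ≤ 4 * x := step2
    _ = 4 * n * a := by rw [hx]; ring
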